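/- Let G be a group acting on a nonempty set S, let G⁰ = G ∪ {0} and S⁰ = S ∪ {0} with the extended action α⁰(g,t) = g•t for g ∈ G, t ∈ S and α⁰(x,y) = 0 if x = 0 or y = 0. If the identity [w]y ≈ [w′]y holds in the 2-sorted algebra (G⁰, S⁰; α⁰), then the words w and w′ contain exactly the same set of variables. -/
import Mathlib


/-- Evaluation of the 2-sorted term `[w]y` in a 2-sorted algebra `(A₁, A₂; s)`. -/
def evalWord {ι A₁ A₂ : Type*} (s : A₁ → A₂ → A₂) (g : ι → A₁)
    (w : List ι) (y : A₂) : A₂ :=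
  w.foldr (fun i acc => s (g i) acc) y

/-- The operation `s⁰` obtained by adjoining a fresh absorbing element `0`
(modelled by `none`) to each sort. -/
def zeroExt {A₁ A₂ : Type*} (s : A₁ → A₂ → A₂) :
    Option A₁ → Option A₂ → Option A₂
  | some a, some b => some (s a b)
  | _, _ => none

lemma eval_none_iff {ι A₁ A₂ : Type*} (s : A₁ → A₂ → A₂) (g : ι → Option A₁)
    (w : List ι) (y : A₂) [DecidableEq ι] :
    evalWord (zeroExt s) g w (some y) = none ↔ ∃ i ∈ w, g i = none := by
  induction w with
  | nil => simp [evalWord]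
  | cons a t ih =>
    simp only [evalWord, List.foldr_cons] at *
    cases hg : g a with
    | none => simp [zeroExt, hg]
    | some v =>
      cases he : t.foldr (fun i acc => zeroExt s (g i) acc) (some y) with
      | none =>
        simp only [he] at ih
        obtain ⟨i, hi, hgi⟩ := ih.mp trivial
        simp only [zeroExt, hg, he, List.mem_cons]
        exact iff_of_true trivial ⟨i, Or.inr hi, hgi⟩
      | some b =>
        simp only [he] at ih
        simp only [zeroExt, List.mem_cons]
        constructor
        · intro hc; exact absurd hc (by simp)
        · rintro ⟨i, hi | hi, hgi⟩
          · rw [hi, hg] at hgi; exact absurd hgi (by simp)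
          · exact absurd (ih.mpr ⟨i, hi, hgi⟩) (by simp)

theorem stmt_19 (G : Type*) [Group G] (S : Type*) [Nonempty S] [MulAction G S]
    (k : ℕ) (w w' : List (Fin k))
    (h : ∀ (g : Fin k → Option G) (y : Option S),
      evalWord (zeroExt (fun (a : G) (b : S) => a • b)) g w y =
      evalWord (zeroExt (fun (a : G) (b : S) => a • b)) g w' y) :
    ∀ i : Fin k, i ∈ w ↔ i ∈ w' := by
  intro i
  set g : Fin k → Option G := fun j => if j = i then none else some 1 with hgdef
  have hy := h g (some (Classical.arbitrary S))
  have key : ∀ v : List (Fin k), (i ∈ v ↔ ∃ j ∈ v, g j = none) := by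
    intro v
    constructor
    · intro hi; exact ⟨i, hi, by simp [hgdef]⟩
    · rintro ⟨j, hj, hgj⟩
      by_cases hji : j = i
      · exact hji ▸ hj
      · simp [hgdef, hji] at hgj
  rw [key w, key w', ← eval_none_iff, ← eval_none_iff, hy]
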